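/- Let G and H be topological groups, let X be a path-connected metric space with a continuous G-action, and let Y be a path-connected metric space with a continuous H-action. Equip X × Y with the component-wise (G × H)-action. Then the effective topological complexities satisfy TC^{G×H,∞}(X × Y) ≤ TC^{G,∞}(X) + TC^{H,∞}(Y) − 1. -/

import Mathlib

open Set

/-- The space of `k`-tuples of paths in `X` that are consecutive up to the `G`-action:
the `(i+1)`-st path starts in the `G`-orbit of the endpoint of the `i`-th path. -/
def effPk (G X : Type*) [Group G] [TopologicalSpace X] [MulAction G X] (k : ℕ) :
    Set (Fin k → C(unitInterval, X)) :=
  {γ | ∀ (i : ℕ) (h : i + 1 < k),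
    γ ⟨i + 1, h⟩ 0 ∈ MulAction.orbit G (γ ⟨i, Nat.lt_of_succ_lt h⟩ 1)}

/-- A `(G,k)`-motion planner on `U ⊆ X × X`: a continuous section over `U` of the map
`π_k` sending a `k`-tuple of consecutive-up-to-`G` paths to its (start, end) pair. -/
def IsEffPlanner (G X : Type*) [Group G] [TopologicalSpace X] [MulAction G X]
    (k : ℕ) (hk : 0 < k) (U : Set (X × X)) : Prop :=
  ∃ s : U → (Fin k → C(unitInterval, X)),
    Continuous s ∧ (∀ u, s u ∈ effPk G X k) ∧
    ∀ u : U, (s u ⟨0, hk⟩) 0 = (u : X × X).1 ∧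
      (s u ⟨k - 1, Nat.sub_lt hk Nat.one_pos⟩) 1 = (u : X × X).2

/-- `TC^{G,k}(X)`: the least `ℓ ≥ 1` such that `X × X` admits an open cover by `ℓ` sets,
each admitting a `(G,k)`-motion planner; `∞` if there is no such `ℓ`. -/
noncomputable def effTC (G X : Type*) [Group G] [TopologicalSpace X] [MulAction G X]
    (k : ℕ) (hk : 0 < k) : ℕ∞ :=
  sInf {ℓ : ℕ∞ | ∃ n : ℕ, ℓ = n ∧ 1 ≤ n ∧
    ∃ U : Fin n → Set (X × X), (∀ i, IsOpen (U i)) ∧ (⋃ i, U i) = Set.univ ∧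
      ∀ i, IsEffPlanner G X k hk (U i)}

/-- Effective topological complexity `TC^{G,∞}(X)`: the minimum of `TC^{G,k}(X)` over `k ≥ 1`. -/
noncomputable def effTCinf (G X : Type*) [Group G] [TopologicalSpace X] [MulAction G X] : ℕ∞ :=
  ⨅ k : ℕ, effTC G X (k + 1) k.succ_pos

/-- Farber's (non-reduced) topological complexity `TC(X)`. -/
noncomputable def farberTC (X : Type*) [TopologicalSpace X] : ℕ∞ :=
  sInf {ℓ : ℕ∞ | ∃ n : ℕ, ℓ = n ∧ 1 ≤ n ∧
    ∃ U : Fin n → Set (X × X), (∀ i, IsOpen (U i)) ∧ (⋃ i, U i) = Set.univ ∧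
      ∀ i, ∃ s : (U i) → C(unitInterval, X), Continuous s ∧
        ∀ u : (U i), (s u) 0 = (u : X × X).1 ∧ (s u) 1 = (u : X × X).2}

/-- The component-wise action of `G × H` on `X × Y`. -/
def prodMulAction (G H X Y : Type*) [Group G] [Group H] [MulAction G X] [MulAction H Y] :
    MulAction (G × H) (X × Y) where
  smul p q := (p.1 • q.1, p.2 • q.2)
  one_smul q := by
    show ((1 : G) • q.1, (1 : H) • q.2) = q
    simp
  mul_smul a b q := by
    show ((a.1 * b.1) • q.1, (a.2 * b.2) • q.2) = (a.1 • b.1 • q.1, a.2 • b.2 • q.2)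
    simp [mul_smul]


open Set

theorem planner_mono {G X : Type*} [Group G] [TopologicalSpace X] [MulAction G X]
    {k : ℕ} {hk : 0 < k} {U V : Set (X × X)} (hVU : V ⊆ U)
    (h : IsEffPlanner G X k hk U) : IsEffPlanner G X k hk V := by
  obtain ⟨s, hs, hmem, hend⟩ := h
  exact ⟨s ∘ Set.inclusion hVU, hs.comp (continuous_inclusion hVU),
    fun u => hmem _, fun u => hend _⟩

theorem planner_pad {G X : Type*} [Group G] [TopologicalSpace X] [MulAction G X]
    {k k' : ℕ} {hk : 0 < k} {hk' : 0 < k'} (hkk' : k ≤ k')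
    {U : Set (X × X)} (h : IsEffPlanner G X k hk U) : IsEffPlanner G X k' hk' U := by
  obtain ⟨s, hs, hmem, hend⟩ := h
  refine ⟨fun u i => if hik : (i : ℕ) < k then s u ⟨i, hik⟩ else
      ContinuousMap.const _ (s u ⟨k - 1, Nat.sub_lt hk Nat.one_pos⟩ 1), ?_, ?_, ?_⟩
  · refine continuous_pi fun i => ?_
    by_cases hik : (i : ℕ) < k
    · simp only [dif_pos hik]
      exact (continuous_apply _).comp hs
    · simp only [dif_neg hik]
      exact ContinuousMap.continuous_const'.comp
        ((ContinuousEvalConst.continuous_eval_const 1).comp ((continuous_apply _).comp hs))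
  · intro u i hi
    by_cases h1 : i + 1 < k
    · have h0 : i < k := Nat.lt_of_succ_lt h1
      simp only [dif_pos h1, dif_pos h0]
      exact hmem u i h1
    · by_cases h2 : i < k
      · have hik : i = k - 1 := by omega
        subst hik
        simp only [dif_neg h1, dif_pos h2]
        exact MulAction.mem_orbit_self _
      · simp only [dif_neg h1, dif_neg h2]
        exact MulAction.mem_orbit_self _
  · intro u
    constructor
    · simp only [dif_pos hk]
      exact (hend u).1
    · by_cases h : k' - 1 < k
      · have : k' = k := by omega
        subst this
        simp only [dif_pos h]
        exact (hend u).2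
      · simp only [dif_neg h]
        exact (hend u).2

theorem mem_orbit_prodMulAction {G H X Y : Type*} [Group G] [Group H]
    [MulAction G X] [MulAction H Y] {a b : X × Y}
    (h1 : a.1 ∈ MulAction.orbit G b.1) (h2 : a.2 ∈ MulAction.orbit H b.2) :
    a ∈ @MulAction.orbit (G × H) (X × Y) (prodMulAction G H X Y).toSMul b := by
  obtain ⟨g, hg⟩ := h1
  obtain ⟨h, hh⟩ := h2
  exact ⟨(g, h), Prod.ext hg hh⟩

theorem planner_prod {G H X Y : Type*} [Group G] [Group H]
    [TopologicalSpace X] [TopologicalSpace Y] [MulAction G X] [MulAction H Y]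
    {k : ℕ} {hk : 0 < k} {U : Set (X × X)} {V : Set (Y × Y)}
    (hU : IsEffPlanner G X k hk U) (hV : IsEffPlanner H Y k hk V) :
    @IsEffPlanner (G × H) (X × Y) _ _ (prodMulAction G H X Y) k hk
      {w : (X × Y) × (X × Y) | (w.1.1, w.2.1) ∈ U ∧ (w.1.2, w.2.2) ∈ V} := by
  obtain ⟨sU, hsU, hmemU, hendU⟩ := hU
  obtain ⟨sV, hsV, hmemV, hendV⟩ := hV
  set W : Set ((X × Y) × (X × Y)) :=
    {w | (w.1.1, w.2.1) ∈ U ∧ (w.1.2, w.2.2) ∈ V} with hW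
  have pUc : Continuous fun w : W => (⟨((w : (X × Y) × (X × Y)).1.1,
      (w : (X × Y) × (X × Y)).2.1), w.2.1⟩ : U) := by
    refine Continuous.subtype_mk ?_ _
    fun_prop
  have pVc : Continuous fun w : W => (⟨((w : (X × Y) × (X × Y)).1.2,
      (w : (X × Y) × (X × Y)).2.2), w.2.2⟩ : V) := by
    refine Continuous.subtype_mk ?_ _
    fun_prop
  refine ⟨fun w i => (sU ⟨(w.1.1.1, w.1.2.1), w.2.1⟩ i).prodMk
      (sV ⟨(w.1.1.2, w.1.2.2), w.2.2⟩ i), ?_, ?_, ?_⟩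
  · refine continuous_pi fun i => ?_
    refine ContinuousMap.continuous_of_continuous_uncurry _ ?_
    have e1 : Continuous fun p : W × unitInterval =>
        (sU ⟨(p.1.1.1.1, p.1.1.2.1), p.1.2.1⟩ i) p.2 := by
      exact ContinuousEval.continuous_eval.comp
        (((continuous_apply i).comp (hsU.comp (pUc.comp continuous_fst))).prodMk
          continuous_snd)
    have e2 : Continuous fun p : W × unitInterval =>
        (sV ⟨(p.1.1.1.2, p.1.1.2.2), p.1.2.2⟩ i) p.2 := by
      exact ContinuousEval.continuous_eval.comp
        (((continuous_apply i).comp (hsV.comp (pVc.comp continuous_fst))).prodMk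
          continuous_snd)
    exact e1.prodMk e2
  · intro w i hi
    exact mem_orbit_prodMulAction (hmemU _ i hi) (hmemV _ i hi)
  · intro w
    constructor
    · exact Prod.ext (hendU _).1 (hendV _).1
    · exact Prod.ext (hendU _).2 (hendV _).2

theorem planner_glue {G X : Type*} [Group G] [TopologicalSpace X] [MulAction G X]
    {k : ℕ} {hk : 0 < k} {ι : Type*} {O : ι → Set (X × X)}
    (hop : ∀ i, IsOpen (O i)) (hdisj : Pairwise (Function.onFun Disjoint O))
    (hpl : ∀ i, IsEffPlanner G X k hk (O i)) :
    IsEffPlanner G X k hk (⋃ i, O i) := by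
  classical
  choose t ht hmem hend using hpl
  have hc : ∀ u : ↥(⋃ i, O i), ∃ i, (u : X × X) ∈ O i := fun u => Set.mem_iUnion.mp u.2
  choose c hc using hc
  have tcongr : ∀ (i j : ι) (h : i = j) (x : ↥(O i)), t i x = t j ⟨x.1, h ▸ x.2⟩ := by
    intro i j h x; subst h; rfl
  refine ⟨fun u => t (c u) ⟨u, hc u⟩, ?_, fun u => hmem _ _, fun u => hend _ _⟩
  rw [continuous_iff_continuousAt]
  intro u
  have hopen : IsOpen (Subtype.val ⁻¹' O (c u) : Set ↥(⋃ i, O i)) :=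
    (hop (c u)).preimage continuous_subtype_val
  have hnb : (Subtype.val ⁻¹' O (c u) : Set ↥(⋃ i, O i)) ∈ nhds u :=
    hopen.mem_nhds (hc u)
  have key : ∀ (v : ↥(⋃ i, O i)) (hv : (v : X × X) ∈ O (c u)),
      t (c v) ⟨v, hc v⟩ = t (c u) ⟨(v : X × X), hv⟩ := by
    intro v hv
    have h : c v = c u := by
      by_contra hne
      exact (hdisj hne).ne_of_mem (hc v) hv rfl
    rw [tcongr (c v) (c u) h ⟨v, hc v⟩]
  have cont : ContinuousOn (fun v : ↥(⋃ i, O i) => t (c v) ⟨v, hc v⟩)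
      (Subtype.val ⁻¹' O (c u)) := by
    rw [continuousOn_iff_continuous_restrict]
    have : Set.domRestrict (Subtype.val ⁻¹' O (c u))
          (fun v : ↥(⋃ i, O i) => t (c v) ⟨v, hc v⟩)
        = fun w => t (c u) ⟨w.1.1, w.2⟩ := by
      funext w
      exact key w.1 w.2
    rw [this]
    exact (ht (c u)).comp (by fun_prop)
  exact cont.continuousAt hnb

theorem cover_combinatorics {Z : Type*} [TopologicalSpace Z] {n m : ℕ}
    (f : Fin n → Z → ℝ) (g : Fin m → Z → ℝ)
    (hfc : ∀ i, Continuous (f i)) (hgc : ∀ j, Continuous (g j))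
    (hf0 : ∀ i z, 0 ≤ f i z) (hg0 : ∀ j z, 0 ≤ g j z)
    (hfpos : ∀ z, ∃ i, 0 < f i z) (hgpos : ∀ z, ∃ j, 0 < g j z) :
    ∃ O : Fin n × Fin m → Set Z,
      (∀ p, IsOpen (O p)) ∧
      (∀ p z, z ∈ O p → 0 < f p.1 z ∧ 0 < g p.2 z) ∧
      (∀ p q, p ≠ q → (p.1 : ℕ) + (p.2 : ℕ) = (q.1 : ℕ) + (q.2 : ℕ) →
        Disjoint (O p) (O q)) ∧
      (∀ z, ∃ p, z ∈ O p) := by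
  classical
  set h : Fin n × Fin m → Z → ℝ := fun p z => f p.1 z * g p.2 z with hh
  have hcont : ∀ p, Continuous (h p) := fun p => (hfc p.1).mul (hgc p.2)
  set lv : Fin n × Fin m → ℕ := fun p => (p.1 : ℕ) + (p.2 : ℕ) with hlv
  refine ⟨fun p => {z | 0 < h p z ∧ ∀ q, lv q ≤ lv p → q ≠ p → h q z < h p z},
    ?_, ?_, ?_, ?_⟩
  · intro p
    show IsOpen {z | 0 < h p z ∧ ∀ q, lv q ≤ lv p → q ≠ p → h q z < h p z}
    have : {z | 0 < h p z ∧ ∀ q, lv q ≤ lv p → q ≠ p → h q z < h p z}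
        = {z | 0 < h p z} ∩ ⋂ q, {z | (lv q ≤ lv p ∧ q ≠ p) → h q z < h p z} := by
      ext z
      simp only [Set.mem_setOf_eq, Set.mem_inter_iff, Set.mem_iInter]
      tauto
    rw [this]
    refine (isOpen_lt continuous_const (hcont p)).inter (isOpen_iInter_of_finite fun q => ?_)
    by_cases hq : lv q ≤ lv p ∧ q ≠ p
    · have : {z | (lv q ≤ lv p ∧ q ≠ p) → h q z < h p z} = {z | h q z < h p z} := by
        ext z; simp [hq]
      rw [this]
      exact isOpen_lt (hcont q) (hcont p)
    · have : {z | (lv q ≤ lv p ∧ q ≠ p) → h q z < h p z} = Set.univ := by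
        ext z; simp [hq]
      rw [this]
      exact isOpen_univ
  · intro p z hz
    have h1 : 0 < f p.1 z * g p.2 z := hz.1
    constructor
    · refine (hf0 p.1 z).lt_of_ne fun he => ?_
      rw [← he, zero_mul] at h1; exact h1.false
    · refine (hg0 p.2 z).lt_of_ne fun he => ?_
      rw [← he, mul_zero] at h1; exact h1.false
  · intro p q hne hlev
    rw [Set.disjoint_left]
    intro z hp hq
    exact lt_asymm (hp.2 q (le_of_eq hlev.symm) hne.symm) (hq.2 p (le_of_eq hlev) hne)
  · intro z
    obtain ⟨i0, hi0⟩ := hfpos z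
    obtain ⟨j0, hj0⟩ := hgpos z
    obtain ⟨pM, -, hpM⟩ := Finset.exists_max_image (Finset.univ : Finset (Fin n × Fin m))
      (fun p => h p z) ⟨(i0, j0), Finset.mem_univ _⟩
    set M := h pM z with hM
    have hMpos : 0 < M := lt_of_lt_of_le (mul_pos hi0 hj0) (hpM (i0, j0) (Finset.mem_univ _))
    set S : Set ℕ := {l | ∃ p, h p z = M ∧ lv p = l} with hS
    have hSne : S.Nonempty := ⟨lv pM, pM, rfl, rfl⟩
    obtain ⟨p, hpMval, hplv⟩ := Nat.sInf_mem hSne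
    have cross : ∀ a b : Fin n × Fin m, h a z = M → h b z = M →
        h (a.1, b.2) z = M := by
      intro a b ha hb
      have e : h (a.1, b.2) z * h (b.1, a.2) z = M * M := by
        have : M * M = h a z * h b z := by rw [ha, hb]
        rw [this]
        show f a.1 z * g b.2 z * (f b.1 z * g a.2 z) = f a.1 z * g a.2 z * (f b.1 z * g b.2 z)
        ring
      have l1 : h (a.1, b.2) z ≤ M := hpM _ (Finset.mem_univ _)
      have l2 : h (b.1, a.2) z ≤ M := hpM _ (Finset.mem_univ _)
      have x0 : 0 ≤ h (a.1, b.2) z := mul_nonneg (hf0 _ _) (hg0 _ _)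
      have e2 : M * M ≤ h (a.1, b.2) z * M := by
        calc M * M = h (a.1, b.2) z * h (b.1, a.2) z := e.symm
        _ ≤ h (a.1, b.2) z * M := mul_le_mul_of_nonneg_left l2 x0
      exact le_antisymm l1 (le_of_mul_le_mul_right e2 hMpos)
    refine ⟨p, ?_, ?_⟩
    · rw [hpMval]; exact hMpos
    · intro q hle hne
      rcases (hpM q (Finset.mem_univ _)).lt_or_eq with hlt | heq
      · rw [hpMval]; exact hlt
      · exfalso
        have h1 : sInf S ≤ lv q := Nat.sInf_le ⟨q, heq, rfl⟩
        have hlveq : lv q = lv p := le_antisymm hle (hplv ▸ h1)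
        have hne1 : (q.1 : ℕ) ≠ (p.1 : ℕ) := by
          intro e
          apply hne
          have e2 : (q.2 : ℕ) = (p.2 : ℕ) := by
            simp only [hlv] at hlveq; omega
          exact Prod.ext (Fin.ext e) (Fin.ext e2)
        rcases hne1.lt_or_gt with hlt1 | hlt1
        · have hcr := cross q p heq hpMval
          have : sInf S ≤ lv (q.1, p.2) := Nat.sInf_le ⟨_, hcr, rfl⟩
          simp only [hlv] at this hlveq hplv
          omega
        · have hcr := cross p q hpMval heq
          have : sInf S ≤ lv (p.1, q.2) := Nat.sInf_le ⟨_, hcr, rfl⟩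
          simp only [hlv] at this hlveq hplv
          omega

theorem enat_sInf_mem {S : Set ℕ∞} (h : sInf S ≠ ⊤) : sInf S ∈ S := by
  have h1 : sInf S < ⊤ := h.lt_top
  obtain ⟨a, haS, ha⟩ := sInf_lt_iff.mp h1
  lift a to ℕ using ha.ne
  have hT : {n : ℕ | (n : ℕ∞) ∈ S}.Nonempty := ⟨a, haS⟩
  have hmem := Nat.sInf_mem hT
  have he : sInf S = ((sInf {n : ℕ | (n : ℕ∞) ∈ S} : ℕ) : ℕ∞) := by
    apply le_antisymm (sInf_le (show ((sInf {n : ℕ | (n : ℕ∞) ∈ S} : ℕ) : ℕ∞) ∈ S from hmem))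
    refine le_sInf fun b hb => ?_
    induction b using ENat.recTopCoe with
    | top => exact le_top
    | coe nb => exact_mod_cast Nat.sInf_le hb
  rw [he]; exact hmem

theorem exists_posfun {W : Type*} [MetricSpace W] {n : ℕ} (U : Fin n → Set W)
    (hop : ∀ i, IsOpen (U i)) (hcov : (⋃ i, U i) = Set.univ) :
    ∃ f : Fin n → W → ℝ, (∀ i, Continuous (f i)) ∧ (∀ i w, 0 ≤ f i w) ∧
      (∀ i w, 0 < f i w → w ∈ U i) ∧ (∀ w, ∃ i, 0 < f i w) := by
  classical
  refine ⟨fun i w => if (U i)ᶜ = ∅ then 1 else Metric.infDist w (U i)ᶜ, ?_, ?_, ?_, ?_⟩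
  · intro i; by_cases hc : (U i)ᶜ = ∅
    · simp only [if_pos hc]; exact continuous_const
    · simp only [if_neg hc]; exact Metric.continuous_infDist_pt _
  · intro i w; by_cases hc : (U i)ᶜ = ∅
    · simp [hc]
    · simp only [if_neg hc]; exact Metric.infDist_nonneg
  · intro i w hpos
    by_cases hc : (U i)ᶜ = ∅
    · have : U i = Set.univ := by rwa [compl_empty_iff] at hc
      rw [this]; trivial
    · have hpos' : 0 < Metric.infDist w (U i)ᶜ := by simp only [if_neg hc] at hpos; exact hpos
      have := ((hop i).isClosed_compl.notMem_iff_infDist_pos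
        (Set.nonempty_iff_ne_empty.mpr hc)).mpr hpos'
      simpa using this
  · intro w
    have hw : w ∈ ⋃ i, U i := hcov ▸ Set.mem_univ w
    obtain ⟨i, hi⟩ := Set.mem_iUnion.mp hw
    refine ⟨i, ?_⟩
    by_cases hc : (U i)ᶜ = ∅
    · simp [hc]
    · show 0 < if (U i)ᶜ = ∅ then (1:ℝ) else Metric.infDist w (U i)ᶜ
      rw [if_neg hc]
      exact ((hop i).isClosed_compl.notMem_iff_infDist_pos
        (Set.nonempty_iff_ne_empty.mpr hc)).mp (by simpa)

theorem effTC_le_of_cover {G X : Type*} [Group G] [TopologicalSpace X] [MulAction G X]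
    {k n : ℕ} {hk : 0 < k} (hn : 1 ≤ n)
    (U : Fin n → Set (X × X)) (hop : ∀ i, IsOpen (U i)) (hcov : (⋃ i, U i) = Set.univ)
    (hpl : ∀ i, IsEffPlanner G X k hk (U i)) :
    effTC G X k hk ≤ (n : ℕ∞) := sInf_le ⟨n, rfl, hn, U, hop, hcov, hpl⟩

theorem effTCinf_le {G X : Type*} [Group G] [TopologicalSpace X] [MulAction G X] (k : ℕ) :
    effTCinf G X ≤ effTC G X (k + 1) k.succ_pos := iInf_le _ k

theorem effTCinf_attained {G X : Type*} [Group G] [TopologicalSpace X] [MulAction G X]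
    (h : effTCinf G X ≠ ⊤) :
    ∃ k, effTCinf G X = effTC G X (k + 1) k.succ_pos := by
  unfold effTCinf iInf at h ⊢
  obtain ⟨k, hk⟩ := enat_sInf_mem h
  exact ⟨k, hk.symm⟩

theorem effTC_spec {G X : Type*} [Group G] [TopologicalSpace X] [MulAction G X]
    {k : ℕ} {hk : 0 < k} (h : effTC G X k hk ≠ ⊤) :
    ∃ n : ℕ, effTC G X k hk = (n : ℕ∞) ∧ 1 ≤ n ∧
      ∃ U : Fin n → Set (X × X), (∀ i, IsOpen (U i)) ∧ (⋃ i, U i) = Set.univ ∧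
        ∀ i, IsEffPlanner G X k hk (U i) := by
  unfold effTC at h ⊢
  exact enat_sInf_mem h

/-- For path-connected metric `G`- and `H`-spaces `X` and `Y`, the
component-wise `(G × H)`-action on `X × Y` satisfies the product inequality
`TC^{G×H,∞}(X × Y) ≤ TC^{G,∞}(X) + TC^{H,∞}(Y) − 1`. -/
theorem effTCinf_prod_le {G H : Type*} [Group G] [Group H]
    [TopologicalSpace G] [TopologicalSpace H] [IsTopologicalGroup G] [IsTopologicalGroup H]
    {X Y : Type*} [MetricSpace X] [MetricSpace Y]
    [PathConnectedSpace X] [PathConnectedSpace Y]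
    [MulAction G X] [MulAction H Y] [ContinuousSMul G X] [ContinuousSMul H Y] :
    @effTCinf (G × H) (X × Y) _ _ (prodMulAction G H X Y) ≤
      effTCinf G X + effTCinf H Y - 1 := by
  letI : MulAction (G × H) (X × Y) := prodMulAction G H X Y
  by_cases hA : effTCinf G X = ⊤
  · have hT : effTCinf G X + effTCinf H Y - 1 = ⊤ := by rw [hA, top_add]; simp
    rw [hT]; exact le_top
  by_cases hB : effTCinf H Y = ⊤
  · have hT : effTCinf G X + effTCinf H Y - 1 = ⊤ := by rw [hB, add_top]; simp
    rw [hT]; exact le_top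
  obtain ⟨k₁, hk₁⟩ := effTCinf_attained hA
  obtain ⟨k₂, hk₂⟩ := effTCinf_attained hB
  obtain ⟨n, hn, hn1, U, hUop, hUcov, hUpl⟩ := effTC_spec (by rw [← hk₁]; exact hA)
  obtain ⟨m, hm, hm1, V, hVop, hVcov, hVpl⟩ := effTC_spec (by rw [← hk₂]; exact hB)
  set K := max k₁ k₂ + 1 with hK
  have hKpos : 0 < K := Nat.succ_pos _
  have hUpl' : ∀ i, IsEffPlanner G X K hKpos (U i) :=
    fun i => planner_pad (by omega) (hUpl i)
  have hVpl' : ∀ j, IsEffPlanner H Y K hKpos (V j) :=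
    fun j => planner_pad (by omega) (hVpl j)
  obtain ⟨f, hfc, hf0, hfU, hfpos⟩ := exists_posfun U hUop hUcov
  obtain ⟨g, hgc, hg0, hgV, hgpos⟩ := exists_posfun V hVop hVcov
  obtain ⟨O, hOop, hOsub, hOdisj, hOcov⟩ :=
    cover_combinatorics (Z := (X × Y) × (X × Y))
      (fun i z => f i (z.1.1, z.2.1)) (fun j z => g j (z.1.2, z.2.2))
      (fun i => (hfc i).comp (by fun_prop)) (fun j => (hgc j).comp (by fun_prop))
      (fun i z => hf0 i _) (fun j z => hg0 j _)
      (fun z => hfpos _) (fun z => hgpos _)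
  have hnm : 1 ≤ n + m - 1 := by omega
  set W : Fin (n + m - 1) → Set ((X × Y) × (X × Y)) :=
    fun r => ⋃ p : {p : Fin n × Fin m // (p.1 : ℕ) + (p.2 : ℕ) = (r : ℕ)}, O p.1 with hWdef
  have hWop : ∀ r, IsOpen (W r) := fun r => isOpen_iUnion fun p => hOop p.1
  have hWcov : (⋃ r, W r) = Set.univ := by
    rw [Set.eq_univ_iff_forall]
    intro z
    obtain ⟨p, hp⟩ := hOcov z
    have hlt1 := p.1.isLt
    have hlt2 := p.2.isLt
    have hr : (p.1 : ℕ) + (p.2 : ℕ) < n + m - 1 := by omega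
    refine Set.mem_iUnion.mpr ⟨⟨(p.1 : ℕ) + (p.2 : ℕ), hr⟩, ?_⟩
    exact Set.mem_iUnion.mpr ⟨⟨p, rfl⟩, hp⟩
  have hWpl : ∀ r, @IsEffPlanner (G × H) (X × Y) _ _ (prodMulAction G H X Y) K hKpos (W r) := by
    intro r
    refine @planner_glue (G × H) (X × Y) _ _ (prodMulAction G H X Y) K hKpos _ _
      (fun p => hOop p.1) ?_ ?_
    · intro p q hpq
      refine hOdisj p.1 q.1 (fun e => hpq (Subtype.ext e)) ?_
      rw [p.2, q.2]
    · intro p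
      refine planner_mono (U := {w : (X × Y) × (X × Y) |
          (w.1.1, w.2.1) ∈ U p.1.1 ∧ (w.1.2, w.2.2) ∈ V p.1.2}) ?_ ?_
      · intro z hz
        obtain ⟨h1, h2⟩ := hOsub p.1 z hz
        exact ⟨hfU _ _ h1, hgV _ _ h2⟩
      · exact planner_prod (hUpl' p.1.1) (hVpl' p.1.2)
  have step1 : @effTCinf (G × H) (X × Y) _ _ (prodMulAction G H X Y) ≤
      ((n + m - 1 : ℕ) : ℕ∞) := by
    refine le_trans (@effTCinf_le (G × H) (X × Y) _ _ (prodMulAction G H X Y) (max k₁ k₂)) ?_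
    exact @effTC_le_of_cover (G × H) (X × Y) _ _ (prodMulAction G H X Y) K (n + m - 1) hKpos
      hnm W hWop hWcov hWpl
  refine le_trans step1 ?_
  rw [hk₁, hn, hk₂, hm]
  push_cast
  rfl
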